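/- Integrated Gradients can fail average weak pairwise monotonicity for a nonzero baseline: the model f(x_1, x_2) = 4.5 x_1 − x_1² + 4 x_2 − x_2² is weakly pairwise monotonic with respect to x_1 over x_2 on [0, 2]², and at explicand x = (2, 2) with baseline x' = (1, 0) one has IG_1((2,2), (1,0), f) = 1.5 and IG_2((2,2), (1,0), f) = 4, so that IG_1/(2 − 1) = 1.5 < 2 = IG_2/(2 − 0); in particular the average weak pairwise monotonicity inequality IG_β(x, x', f)/(x_β − x'_β) ≥ IG_γ(x, x', f)/(x_γ − x'_γ) fails at an explicand with x_1 = x_2. -/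

import Mathlib

/-- The model `f(x₁, x₂) = 4.5x₁ − x₁² + 4x₂ − x₂²`. -/
noncomputable def f (a b : ℝ) : ℝ := 4.5 * a - a ^ 2 + 4 * b - b ^ 2

lemma deriv_f_left (b x : ℝ) : deriv (fun s : ℝ => f s b) x = 4.5 - 2 * x := by
  have : (fun s : ℝ => f s b) = fun s : ℝ => 4.5 * s - s ^ 2 + 4 * b - b ^ 2 := rfl
  rw [this]
  have h : HasDerivAt (fun s : ℝ => 4.5 * s - s ^ 2 + 4 * b - b ^ 2) (4.5 - 2 * x) x := by
    have := (((hasDerivAt_id x).const_mul (4.5 : ℝ)).sub ((hasDerivAt_pow 2 x))).add_const (4 * b)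
    have := this.sub_const (b ^ 2)
    exact this.congr_deriv (by norm_num <;> ring)
  exact h.deriv

lemma deriv_f_right (a x : ℝ) : deriv (fun s : ℝ => f a s) x = 4 - 2 * x := by
  have : (fun s : ℝ => f a s) = fun s : ℝ => 4.5 * a - a ^ 2 + 4 * s - s ^ 2 := rfl
  rw [this]
  have h : HasDerivAt (fun s : ℝ => 4.5 * a - a ^ 2 + 4 * s - s ^ 2) (4 - 2 * x) x := by
    have := (((hasDerivAt_id x).const_mul (4 : ℝ)).const_add (4.5 * a - a ^ 2)).sub
      (hasDerivAt_pow 2 x)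
    exact this.congr_deriv (by norm_num <;> ring)
  exact h.deriv

/-- Integrated Gradients can fail average weak pairwise monotonicity for a nonzero
baseline: `f(x₁, x₂) = 4.5x₁ − x₁² + 4x₂ − x₂²` is weakly pairwise monotonic with respect
to `x₁` over `x₂` on `[0,2]²` (for `x₁ = x₂` in `[0,2]` and `c > 0` keeping the perturbed
points in `[0,2]²`), and at explicand `(2,2)` with baseline `(1,0)` one has
`IG₁((2,2),(1,0),f) = 1.5` and `IG₂((2,2),(1,0),f) = 4`, so that
`IG₁/(2 − 1) = 1.5 < 2 = IG₂/(2 − 0)`; thus the average weak pairwise monotonicity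
inequality fails at an explicand with `x₁ = x₂`. Here
`IG_i((2,2),(1,0),f) = (x_i − x'_i) · ∫_0^1 (∂f/∂x_i)(1 + t·(2−1), 0 + t·(2−0)) dt`. -/
theorem ig_fails_average_weak_pairwise_monotonicity_nonzero_baseline :
    (∀ a c : ℝ, 0 ≤ a → a ≤ 2 → 0 < c → a + c ≤ 2 → f a (a + c) ≤ f (a + c) a) ∧
    ((2 - 1 : ℝ) * ∫ t in (0:ℝ)..1,
        deriv (fun s : ℝ => f s (0 + t * (2 - 0))) (1 + t * (2 - 1))) = 1.5 ∧
    ((2 - 0 : ℝ) * ∫ t in (0:ℝ)..1,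
        deriv (fun s : ℝ => f (1 + t * (2 - 1)) s) (0 + t * (2 - 0))) = 4 ∧
    ((1.5 : ℝ) / (2 - 1) < 4 / (2 - 0)) := by
  refine ⟨fun a c _ _ hc _ => ?_, ?_, ?_, by norm_num⟩
  · simp only [f]; nlinarith
  · have : ∀ t : ℝ, deriv (fun s : ℝ => f s (0 + t * (2 - 0))) (1 + t * (2 - 1))
        = 2.5 - 2 * t := by
      intro t; rw [deriv_f_left]; ring
    simp only [this]
    have hint : ∫ t in (0:ℝ)..1, (2.5 - 2 * t) = 1.5 := by
      rw [intervalIntegral.integral_eq_sub_of_hasDerivAt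
        (f := fun t : ℝ => 2.5 * t - t ^ 2) (f' := fun t : ℝ => 2.5 - 2 * t) (fun x _ => by
          have := ((hasDerivAt_id x).const_mul (2.5 : ℝ)).sub (hasDerivAt_pow 2 x)
          exact this.congr_deriv (by norm_num <;> ring))
        ((continuous_const.sub (continuous_const.mul continuous_id)).intervalIntegrable _ _)]
      norm_num
    rw [hint]; norm_num
  · have : ∀ t : ℝ, deriv (fun s : ℝ => f (1 + t * (2 - 1)) s) (0 + t * (2 - 0))
        = 4 - 4 * t := by
      intro t; rw [deriv_f_right]; ring
    simp only [this]
    have hint : ∫ t in (0:ℝ)..1, (4 - 4 * t) = 2 := by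
      rw [intervalIntegral.integral_eq_sub_of_hasDerivAt
        (f := fun t : ℝ => 4 * t - 2 * t ^ 2) (f' := fun t : ℝ => 4 - 4 * t) (fun x _ => by
          have := ((hasDerivAt_id x).const_mul (4 : ℝ)).sub
            ((hasDerivAt_pow 2 x).const_mul (2 : ℝ))
          exact this.congr_deriv (by norm_num <;> ring))
        ((continuous_const.sub (continuous_const.mul continuous_id)).intervalIntegrable _ _)]
      norm_num
    rw [hint]; norm_num
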